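/- Let q be a self-join-free Boolean conjunctive query with the key-join property. If F attacks G in the attack graph of q, then there exists a sequence F_0, F_1, ..., F_ℓ of atoms of q with F_0 = F, F_ℓ = G, and for all i ∈ {1,...,ℓ}, key(F_i) ⊆ vars(F_{i-1}). -/

import Mathlib

/-- A set `Vs` of valuations satisfies the functional dependency `X → Y`. -/
def FDSat {V D : Type} (Vs : Set (V → D)) (X Y : Set V) : Prop :=
  ∀ θ ∈ Vs, ∀ μ ∈ Vs, (∀ x ∈ X, θ x = μ x) → ∀ y ∈ Y, θ y = μ y

/-- Logical implication of functional dependencies, with respect to finite sets of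
valuations into the domain `D`. -/
def FDImplies {V : Type} (D : Type) (Sg : Set (Set V × Set V)) (X Y : Set V) : Prop :=
  ∀ Vs : Set (V → D), Vs.Finite → (∀ σ ∈ Sg, FDSat Vs σ.1 σ.2) → FDSat Vs X Y

/-- `FD(s) = {key(F) → vars(F) : F ∈ s}`, for a set `s` of atoms. -/
def FDsetA {A V : Type} (keyA varsA : A → Set V) (s : Set A) : Set (Set V × Set V) :=
  (fun F => (keyA F, varsA F)) '' s

/-- The atoms of `q` of mode `c` (consistent relations). -/
def catomsA {A : Type} (mode : A → Bool) (q : Set A) : Set A :=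
  {F ∈ q | mode F = true}

/-- The closure `key⁺(F,q)`: all variables `x` with
`FD(q \ {F}) ∪ FD(c-atoms(q)) ⊨ key(F) → x`. -/
def keyCl {A V : Type} (D : Type) (keyA varsA : A → Set V) (mode : A → Bool)
    (q : Set A) (F : A) : Set V :=
  {x | FDImplies D (FDsetA keyA varsA ((q \ {F}) ∪ catomsA mode q)) (keyA F) {x}}

/-- One step of a witness for an attack by the atom whose closure is `X`:
the next atom `H` is in `q` and shares with the current atom `G` a variable
outside `X`. -/
def attackStep {A V : Type} (varsA : A → Set V) (q : Set A) (X : Set V)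
    (G H : A) : Prop :=
  H ∈ q ∧ ∃ x, x ∈ varsA G ∧ x ∈ varsA H ∧ x ∉ X

/-- `F` attacks `G` in the attack graph of `q`: `F ≠ G`, both in `q`, and there is
a witness sequence from `F` to `G` each step of which shares a variable outside
`key⁺(F,q)`. -/
def attacks {A V : Type} (D : Type) (keyA varsA : A → Set V) (mode : A → Bool)
    (q : Set A) (F G : A) : Prop :=
  F ∈ q ∧ G ∈ q ∧ F ≠ G ∧
    Relation.ReflTransGen (attackStep varsA q (keyCl D keyA varsA mode q F)) F G

/-- The key-join property: any two atoms of `q` either share no variables, or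
their shared variables are exactly the key variables of one of them, or the
shared variables contain all key variables of both. -/
def KeyJoin {A V : Type} (keyA varsA : A → Set V) (q : Set A) : Prop :=
  ∀ F ∈ q, ∀ G ∈ q,
    varsA F ∩ varsA G = ∅ ∨ varsA F ∩ varsA G = keyA F ∨
    varsA F ∩ varsA G = keyA G ∨ keyA F ∪ keyA G ⊆ varsA F ∩ varsA G

/-- If a self-join-free Boolean conjunctive query `q` has the key-join property
and `F` attacks `G`, then there is a sequence `F₀ = F, F₁, …, F_ℓ = G` of atoms
of `q` with `key(F_i) ⊆ vars(F_{i-1})` for all `i ∈ {1,…,ℓ}`. -/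
theorem keyjoin_attack_chain {A V D : Type} [Infinite D]
    (keyA varsA : A → Set V) (mode : A → Bool)
    (q : Set A) (hq : q.Finite) (hkey : ∀ F, keyA F ⊆ varsA F)
    (hkj : KeyJoin keyA varsA q) (F G : A)
    (hatt : attacks D keyA varsA mode q F G) :
    ∃ L : List A, L ≠ [] ∧ L.head? = some F ∧ L.getLast? = some G ∧
      (∀ H ∈ L, H ∈ q) ∧
      ∀ i (h : i + 1 < L.length),
        keyA (L.get ⟨i + 1, h⟩) ⊆ varsA (L.get ⟨i, Nat.lt_of_succ_lt h⟩) := by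
  obtain ⟨hFq, hGq, _hne, hwit⟩ := hatt
  set X := keyCl D keyA varsA mode q F with hXdef
  -- key(F) ⊆ X
  have hFX : keyA F ⊆ X := by
    intro x hx
    intro Vs _ _ θ hθ μ hμ hag y hy
    rcases hy with rfl
    exact hag y hx
  -- the chain relation
  set R : A → A → Prop := fun a b => b ∈ q ∧ keyA b ⊆ varsA a with hRdef
  -- extension lemma
  have extend : ∀ e, Relation.ReflTransGen R F e → ∀ H, H ∈ q →
      (∃ x, x ∈ varsA e ∧ x ∈ varsA H ∧ x ∉ X) → Relation.ReflTransGen R F H := by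
    intro e he
    induction he with
    | refl =>
      intro H hHq ⟨x, hxF, hxH, hxX⟩
      rcases hkj F hFq H hHq with h0 | h1 | h2 | h3
      · exact absurd (h0 ▸ (Set.mem_inter hxF hxH)) (Set.notMem_empty x)
      · exact absurd (hFX (h1 ▸ Set.mem_inter hxF hxH)) hxX
      · have hsub : keyA H ⊆ varsA F := h2 ▸ Set.inter_subset_left
        exact Relation.ReflTransGen.single ⟨hHq, hsub⟩
      · exact Relation.ReflTransGen.single ⟨hHq,
          fun y hy => (h3 (Set.mem_union_right _ hy)).1⟩
    | @tail b e hFb hbe ih =>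
      intro H hHq ⟨x, hxe, hxH, hxX⟩
      have hbq : e ∈ q := hbe.1
      rcases hkj e hbq H hHq with h0 | h1 | h2 | h3
      · exact absurd (h0 ▸ (Set.mem_inter hxe hxH)) (Set.notMem_empty x)
      · -- vars e ∩ vars H = key e, so x ∈ key e ⊆ vars b : restart from b
        have hxkey : x ∈ keyA e := h1 ▸ Set.mem_inter hxe hxH
        exact ih H hHq ⟨x, hbe.2 hxkey, hxH, hxX⟩
      · have hsub : keyA H ⊆ varsA e := h2 ▸ Set.inter_subset_left
        exact (hFb.tail hbe).tail ⟨hHq, hsub⟩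
      · exact (hFb.tail hbe).tail ⟨hHq,
          fun y hy => (h3 (Set.mem_union_right _ hy)).1⟩
  -- build the chain R-path from the witness
  have hchain : Relation.ReflTransGen R F G := by
    clear _hne hGq
    induction hwit with
    | refl => exact Relation.ReflTransGen.refl
    | @tail b e _ hbe ih =>
      obtain ⟨hEq, x, hxb, hxe, hxX⟩ := hbe
      exact extend b ih e hEq ⟨x, hxb, hxe, hxX⟩
  -- convert the R-path to a list
  obtain ⟨l, hl, hlast⟩ := List.exists_isChain_cons_of_relationReflTransGen hchain
  refine ⟨F :: l, List.cons_ne_nil _ _, rfl, ?_, ?_, ?_⟩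
  · rw [List.getLast?_eq_getLast (List.cons_ne_nil _ _), hlast]
  · -- membership
    have : ∀ (a : A) (l' : List A), List.IsChain R (a :: l') → ∀ H ∈ l', H ∈ q := by
      intro a l' hc
      induction l' generalizing a with
      | nil => intro H h; simp at h
      | cons b l'' ih =>
        rw [List.isChain_cons_cons] at hc
        intro H hH
        rcases List.mem_cons.mp hH with rfl | hH
        · exact hc.1.1
        · exact ih b hc.2 H hH
    intro H hH
    rcases List.mem_cons.mp hH with rfl | hH
    · exact hFq
    · exact this F l hl H hH
  · -- consecutive key containments
    have hc' : List.IsChain (fun a b => keyA b ⊆ varsA a) (F :: l) := by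
      have := hl
      exact List.IsChain.imp (fun a b hab => hab.2) this
    intro i h
    have := List.isChain_iff_getElem.mp hc' i h
    exact this
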